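/- Let T and N be linear relations in a complex vector space V and let λ ∈ ℂ. Then Ker_λ(T +̂ N) = R_{(T−λI)⁻¹ − (N−λI)⁻¹}, where for relations A and B the (operator-like) difference is A − B = {(u, x − y) : (u,x) ∈ A, (u,y) ∈ B}. -/
import Mathlib


noncomputable section

variable {V : Type*} [AddCommGroup V] [Module ℂ V]

def domSet (A : Set (V × V)) : Set V := {x | ∃ y, (x, y) ∈ A}
def ranSet (A : Set (V × V)) : Set V := {y | ∃ x, (x, y) ∈ A}
def mulSet (A : Set (V × V)) : Set V := {y | ((0 : V), y) ∈ A}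
def kerl (A : Set (V × V)) (l : ℂ) : Set V := {x | (x, l • x) ∈ A}
def pointSpec (A : Set (V × V)) : Set ℂ := {l | ∃ x : V, x ≠ 0 ∧ (x, l • x) ∈ A}
/-- The relation `A − λI = {(x, y − λx) : (x,y) ∈ A}`. -/
def shiftRel (A : Set (V × V)) (l : ℂ) : Set (V × V) := {p | ∃ q ∈ A, p = (q.1, q.2 - l • q.1)}
def invRel (A : Set (V × V)) : Set (V × V) := {p | (p.2, p.1) ∈ A}
def imageRel (A : Set (V × V)) (M : Set V) : Set V := {y | ∃ x ∈ M, (x, y) ∈ A}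
def setSum (A B : Set V) : Set V := {z | ∃ a ∈ A, ∃ b ∈ B, z = a + b}
/-- Componentwise sum `T +̂ N = {(x+u, y+v) : (x,y) ∈ T, (u,v) ∈ N}`. -/
def cwSum (A B : Set (V × V)) : Set (V × V) := {p | ∃ a ∈ A, ∃ b ∈ B, p = a + b}
/-- Operator-like difference `A − B = {(u, x − y) : (u,x) ∈ A, (u,y) ∈ B}`. -/
def diffRel (A B : Set (V × V)) : Set (V × V) :=
  {p | ∃ x y, (p.1, x) ∈ A ∧ (p.1, y) ∈ B ∧ p.2 = x - y}

/-- Proposition 3.1: `Ker_λ(T +̂ N) = R_{(T−λI)⁻¹ − (N−λI)⁻¹}`. -/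
theorem statement9 (T N : Submodule ℂ (V × V)) (l : ℂ) :
    kerl (cwSum (T : Set (V × V)) (N : Set (V × V))) l
      = ranSet (diffRel (invRel (shiftRel (T : Set (V × V)) l))
          (invRel (shiftRel (N : Set (V × V)) l))) := by
  ext x
  constructor
  · rintro ⟨⟨a, b⟩, hab, ⟨u, v⟩, huv, hx⟩
    have h1 : x = a + u := congrArg Prod.fst hx
    have h2 : l • x = b + v := congrArg Prod.snd hx
    subst h1
    have h3 : l • a + l • u = b + v := by rw [← smul_add]; exact h2
    refine ⟨b - l • a, a, -u, ⟨⟨a, b⟩, hab, rfl⟩, ⟨⟨-u, -v⟩, N.neg_mem huv, ?_⟩, by abel⟩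
    have : b - l • a = -v - l • -u := by
      rw [smul_neg]; linear_combination (norm := module) - h3
    simpa using this
  · rintro ⟨u, p, q, hp, hq, hx⟩
    obtain ⟨⟨a, b⟩, hab, hT⟩ := hp
    obtain ⟨⟨c, d⟩, hcd, hN⟩ := hq
    have ha : p = a := congrArg Prod.fst hT
    have hu1 : u = b - l • a := congrArg Prod.snd hT
    have hc : q = c := congrArg Prod.fst hN
    have hu2 : u = d - l • c := congrArg Prod.snd hN
    subst ha hc hx
    refine ⟨⟨p, b⟩, hab, ⟨-q, -d⟩, N.neg_mem hcd, ?_⟩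
    have : l • (p - q) = b + -d := by
      rw [smul_sub]; linear_combination (norm := module) hu1 - hu2
    rw [Prod.mk_add_mk, ← this, sub_eq_add_neg]
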